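/- Let G be a graph with diameter d and a resolving set S. Let T be a tree decomposition of G of width w and length ℓ, rooted arbitrarily, and let X be a bag such that every bag Y in the subtree below X satisfies Y ∩ S ⊆ X. Then the union A of all bags in the subtree rooted at X satisfies |A| ≤ (d+1)(2ℓ+1)^w. -/

import Mathlib

/-- A tree decomposition of a graph `G`. -/
structure TreeDecomposition {V : Type*} (G : SimpleGraph V) (ι : Type*) where
  T : SimpleGraph ι
  isTree : T.IsTree
  bag : ι → Set V
  covers_vertices : ∀ v : V, ∃ i, v ∈ bag i
  covers_edges : ∀ ⦃u v : V⦄, G.Adj u v → ∃ i, u ∈ bag i ∧ v ∈ bag i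
  bags_connected : ∀ v : V, (T.induce {i | v ∈ bag i}).Connected

/-- A set `R` of vertices of a graph `G` is a resolving set. -/
def SimpleGraph.IsResolvingSet {V : Type*} (G : SimpleGraph V) (R : Set V) : Prop :=
  ∀ u v : V, u ≠ v → ∃ x ∈ R, G.dist x u ≠ G.dist x v

/-- With respect to a root `ρ` of the decomposition tree `T`, the descendants of a node
`i` are the nodes `j` such that every walk from `j` to `ρ` passes through `i`. -/
def Descendants {ι : Type*} (T : SimpleGraph ι) (ρ i : ι) : Set ι :=
  {j | ∀ q : T.Walk j ρ, i ∈ q.support}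

/-- Let `G` be a graph with diameter `d` and a resolving set `S`.  Let `td` be a tree
decomposition of `G` of width `w` and length `ℓ`, rooted at `ρ`, and let `X = bag i` be a
bag such that every bag `Y` in the subtree below `i` satisfies `Y ∩ S ⊆ X`.  Then the
union `A` of all bags in the subtree rooted at `i` satisfies `|A| ≤ (d+1)(2ℓ+1)^w`. -/
theorem statement7 {V ι : Type*} [Fintype V] (G : SimpleGraph V) (hG : G.Connected)
    (d k w ℓ : ℕ) (hd : G.diam = d)
    (S : Set V) (hS : G.IsResolvingSet S)
    (td : TreeDecomposition G ι)
    (hw : ∀ i, (td.bag i).ncard ≤ w + 1)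
    (hℓ : ∀ i, ∀ u ∈ td.bag i, ∀ v ∈ td.bag i, G.dist u v ≤ ℓ)
    (ρ i : ι)
    (hSin : ∀ j ∈ Descendants td.T ρ i, td.bag j ∩ S ⊆ td.bag i)
    (A : Set V) (hA : A = ⋃ j ∈ Descendants td.T ρ i, td.bag j) :
    A.ncard ≤ (d + 1) * (2 * ℓ + 1) ^ w := by
  classical
  set D := Descendants td.T ρ i with hD
  set X := td.bag i with hX
  have hAmem : ∀ v, v ∈ A ↔ ∃ j ∈ D, v ∈ td.bag j := by
    intro v; rw [hA]; simp
  -- the key separation claim for a single vertex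
  have key : ∀ (v : V) (j j' : ι), j ∈ D → j' ∉ D → v ∈ td.bag j → v ∈ td.bag j' →
      v ∈ X := by
    intro v j j' hj hj' hvj hvj'
    have hconn := td.bags_connected v
    obtain ⟨p⟩ := hconn.preconnected ⟨j, hvj⟩ ⟨j', hvj'⟩
    rw [hD] at hj'
    simp only [Descendants, Set.mem_setOf_eq, not_forall] at hj'
    obtain ⟨q, hq⟩ := hj'
    have hi := hj ((p.map (SimpleGraph.Embedding.induce {k | v ∈ td.bag k}).toHom).append q)
    erw [SimpleGraph.Walk.support_append, SimpleGraph.Walk.support_map] at hi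
    rcases List.mem_append.mp hi with h1 | h2
    · obtain ⟨kk, hkk, hkk2⟩ := List.mem_map.mp h1
      have hcoe : (kk : ι) = i := hkk2
      rw [hX, ← hcoe]
      exact kk.2
    · exact absurd (List.mem_of_mem_tail h2) hq
  -- every walk from a vertex outside A to a vertex of A passes through X
  have sep : ∀ (s u : V) (p : G.Walk s u), s ∉ A → u ∈ A → ∃ x ∈ p.support, x ∈ X := by
    intro s u p
    induction p with
    | nil => intro hs hu; exact absurd hu hs
    | @cons s b u h q ih =>
      intro hs hu
      by_cases hb : b ∈ A
      · obtain ⟨j, hsj, hbj⟩ := td.covers_edges h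
        have hjD : j ∉ D := fun hjD => hs ((hAmem s).2 ⟨j, hjD, hsj⟩)
        obtain ⟨j', hj', hbj'⟩ := (hAmem b).1 hb
        exact ⟨b, by simp [SimpleGraph.Walk.support_cons, q.start_mem_support],
          key b j' j hj' hjD hbj' hbj⟩
      · obtain ⟨x, hx1, hx2⟩ := ih hb hu
        exact ⟨x, by simp [SimpleGraph.Walk.support_cons, hx1], hx2⟩
  -- distances from outside vertices are determined by distances from X
  have distle : ∀ s u v : V, s ∉ A → u ∈ A → v ∈ A →
      (∀ x ∈ X, G.dist x u = G.dist x v) → G.dist s v ≤ G.dist s u := by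
    intro s u v hs hu hv hxy
    obtain ⟨p, hp⟩ := hG.exists_walk_length_eq_dist s u
    obtain ⟨x, hx, hxX⟩ := sep s u p hs hu
    have h1 : G.dist s x ≤ (p.takeUntil x hx).length := SimpleGraph.dist_le _
    have h2 : G.dist x u ≤ (p.dropUntil x hx).length := SimpleGraph.dist_le _
    have h3 : (p.takeUntil x hx).length + (p.dropUntil x hx).length = p.length := by
      rw [← SimpleGraph.Walk.length_append, SimpleGraph.Walk.take_spec]
    have h4 : G.dist s x + G.dist x u ≤ G.dist s u := by omega
    calc G.dist s v ≤ G.dist s x + G.dist x v := hG.dist_triangle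
      _ = G.dist s x + G.dist x u := by rw [hxy x hxX]
      _ ≤ G.dist s u := h4
  -- injectivity of the distance-vector map
  have inj : ∀ u ∈ A, ∀ v ∈ A, (∀ x ∈ X, G.dist x u = G.dist x v) → u = v := by
    intro u hu v hv hphi
    by_contra hne
    obtain ⟨s, hsS, hsd⟩ := hS u v hne
    by_cases hsA : s ∈ A
    · obtain ⟨j, hj, hsj⟩ := (hAmem s).1 hsA
      exact hsd (hphi s (hSin j hj ⟨hsj, hsS⟩))
    · have h1 := distle s u v hsA hu hv hphi
      have h2 := distle s v u hsA hv hu (fun x hx => (hphi x hx).symm)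
      exact hsd (le_antisymm h2 h1)
  -- trivial case: X empty
  rcases Set.eq_empty_or_nonempty X with hXe | ⟨x₀, hx₀⟩
  · have : A.Subsingleton := by
      intro u hu v hv
      exact inj u hu v hv (fun x hx => by rw [hXe] at hx; exact absurd hx (Set.notMem_empty x))
    calc A.ncard ≤ 1 := (Set.ncard_le_one (Set.toFinite A)).2 (fun a ha b hb => this ha hb)
      _ ≤ (d + 1) * (2 * ℓ + 1) ^ w := Nat.one_le_iff_ne_zero.2 (by positivity)
  -- main case
  have hV : Nonempty V := ⟨x₀⟩
  have hediam : G.ediam ≠ ⊤ := by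
    obtain ⟨u, v, huv⟩ := SimpleGraph.exists_edist_eq_ediam_of_finite (G := G)
    rw [← huv]
    exact SimpleGraph.edist_ne_top_iff_reachable.2 (hG u v)
  have hdistd : ∀ u : V, G.dist x₀ u ≤ d := fun u => hd ▸ SimpleGraph.dist_le_diam hediam
  -- the bound on the difference
  have hdiff : ∀ u ∈ A, ∀ x ∈ X, G.dist x u ≤ ℓ + G.dist x₀ u ∧ G.dist x₀ u ≤ ℓ + G.dist x u := by
    intro u hu x hx
    have hxx₀ : G.dist x x₀ ≤ ℓ := hℓ i x hx x₀ hx₀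
    have hx₀x : G.dist x₀ x ≤ ℓ := hℓ i x₀ hx₀ x hx
    constructor
    · calc G.dist x u ≤ G.dist x x₀ + G.dist x₀ u := hG.dist_triangle
        _ ≤ ℓ + G.dist x₀ u := by omega
    · calc G.dist x₀ u ≤ G.dist x₀ x + G.dist x u := hG.dist_triangle
        _ ≤ ℓ + G.dist x u := by omega
  set X' : Set V := X \ {x₀} with hX'
  let f : A → Fin (d + 1) × (X' → Fin (2 * ℓ + 1)) := fun u =>
    (⟨G.dist x₀ u, Nat.lt_succ_of_le (hdistd u)⟩,
     fun x => ⟨G.dist (x : V) u + ℓ - G.dist x₀ u, by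
        have := hdiff u u.2 x x.2.1
        omega⟩)
  have hf : Function.Injective f := by
    intro u v huv
    have h0 : G.dist x₀ (u : V) = G.dist x₀ (v : V) := by
      have := congrArg (fun z => (Prod.fst z : Fin (d+1)).val) huv
      simpa using this
    apply Subtype.ext
    apply inj u u.2 v v.2
    intro x hx
    by_cases hxx₀ : x = x₀
    · rw [hxx₀]; exact h0
    · have hxX' : x ∈ X' := ⟨hx, hxx₀⟩
      have := congrArg (fun z => ((Prod.snd z) ⟨x, hxX'⟩ : Fin (2*ℓ+1)).val) huv
      simp only [f] at this
      have hu := hdiff u u.2 x hx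
      have hv := hdiff v v.2 x hx
      omega
  have hcard : Nat.card A ≤ Nat.card (Fin (d + 1) × (X' → Fin (2 * ℓ + 1))) :=
    Nat.card_le_card_of_injective f hf
  rw [Nat.card_prod, Nat.card_fun, Nat.card_eq_fintype_card (α := Fin (d+1)),
    Nat.card_eq_fintype_card (α := Fin (2*ℓ+1)), Fintype.card_fin, Fintype.card_fin] at hcard
  have hX'card : Nat.card X' ≤ w := by
    rw [Nat.card_coe_set_eq]
    have h5 := Set.ncard_diff_singleton_of_mem hx₀
    have hXw := hw i
    rw [← hX] at hXw
    rw [hX']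
    omega
  calc A.ncard = Nat.card A := rfl
    _ ≤ (d + 1) * (2 * ℓ + 1) ^ Nat.card X' := hcard
    _ ≤ (d + 1) * (2 * ℓ + 1) ^ w :=
        Nat.mul_le_mul_left _ (Nat.pow_le_pow_right (by omega) hX'card)
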